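/- Let X and Y be topological spaces and M a divisible abelian group. If X is Y-unitary, then every homotopy invariant f : C(X,Y) → M is straight. -/

import Mathlib

open FreeAbelianGroup in
/-- `L(X,Y)`: the subgroup of `Hom(⟨X⟩,⟨Y⟩)` generated by the homomorphisms `u` such that
each `u⟨x⟩` is `0` or some basis element `⟨y⟩`. -/
def Lgroup (X Y : Type*) : AddSubgroup (FreeAbelianGroup X →+ FreeAbelianGroup Y) :=
  AddSubgroup.closure {u | ∀ x : X, u (of x) = 0 ∨ ∃ y : Y, u (of x) = of y}

/-- The homomorphism `⟨a⟩ : ⟨X⟩ → ⟨Y⟩` induced by a map `a : X → Y`. -/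
def inducedHom {X Y : Type*} (a : X → Y) : FreeAbelianGroup X →+ FreeAbelianGroup Y :=
  FreeAbelianGroup.lift (fun x => FreeAbelianGroup.of (a x))

lemma inducedHom_mem {X Y : Type*} (a : X → Y) : inducedHom a ∈ Lgroup X Y :=
  AddSubgroup.subset_closure (fun x => Or.inr ⟨a x, by simp [inducedHom, FreeAbelianGroup.lift_apply_of]⟩)

/-- `⟨a⟩` as an element of `L(X,Y)`. -/
def inducedL {X Y : Type*} (a : X → Y) : Lgroup X Y := ⟨inducedHom a, inducedHom_mem a⟩

/-- A function on continuous maps is a homotopy invariant if it only depends on homotopy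
classes. -/
def IsHomotopyInvariant {X Y : Type*} [TopologicalSpace X] [TopologicalSpace Y] {M : Type*}
    [AddCommGroup M] (f : C(X, Y) → M) : Prop :=
  ∀ a b : C(X, Y), a.Homotopic b → f a = f b

/-- A homotopy invariant `f` is straight if it factors as `f a = F ⟨a⟩` for an additive
homomorphism `F : L(X,Y) → M`. -/
def IsStraight {X Y : Type*} [TopologicalSpace X] [TopologicalSpace Y] {M : Type*}
    [AddCommGroup M] (f : C(X, Y) → M) : Prop :=
  ∃ F : Lgroup X Y →+ M, ∀ a : C(X, Y), f a = F (inducedL a)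

/-- A set `E ⊆ X` is `Y`-representative if any two continuous maps `X → Y` that agree on `E`
are homotopic. -/
def IsRepresentative (Y : Type*) [TopologicalSpace Y] {X : Type*} [TopologicalSpace X]
    (E : Set X) : Prop :=
  ∀ a b : C(X, Y), Set.EqOn ⇑a ⇑b E → a.Homotopic b

/-- `X` is `Y`-unitary if every finite cover of `X` contains a `Y`-representative set. -/
def IsUnitary (X Y : Type*) [TopologicalSpace X] [TopologicalSpace Y] : Prop :=
  ∀ S : Finset (Set X), (∀ x : X, ∃ E ∈ S, x ∈ E) → ∃ E ∈ S, IsRepresentative Y E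


section Aux

private lemma freeAbelianGroup_eq_sum_support {α : Type*} (z : FreeAbelianGroup α) :
    z = ∑ a ∈ z.support, FreeAbelianGroup.coeff a z • FreeAbelianGroup.of a := by
  apply (FreeAbelianGroup.equivFinsupp α).injective
  simp only [map_sum, map_zsmul]
  have h1 : ∀ a : α, (FreeAbelianGroup.equivFinsupp α) (FreeAbelianGroup.of a) =
      Finsupp.single a 1 := fun a => FreeAbelianGroup.toFinsupp_of a
  rw [Finset.sum_congr rfl (fun a _ => by rw [h1, Finsupp.smul_single, smul_eq_mul, mul_one])]
  conv_lhs => rw [← Finsupp.sum_single ((FreeAbelianGroup.equivFinsupp α) z)]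
  rfl

/-- The key combinatorial lemma: a vanishing integer linear relation among the induced
homomorphisms of continuous maps forces the corresponding relation among the values of a
homotopy invariant, provided `X` is `Y`-unitary. -/
private lemma key_relation {X Y : Type*} [TopologicalSpace X] [TopologicalSpace Y] {M : Type*}
    [AddCommGroup M] (hXY : IsUnitary X Y) (f : C(X, Y) → M) (hf : IsHomotopyInvariant f)
    (s : Finset C(X, Y)) (g : C(X, Y) → ℤ)
    (hrel : ∑ a ∈ s, g a • inducedHom ⇑a = 0) :
    ∑ a ∈ s, g a • f a = 0 := by
  classical
  -- X is nonempty, else the empty cover contradicts unitarity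
  rcases isEmpty_or_nonempty X with hX | hX
  · obtain ⟨E, hE, -⟩ := hXY ∅ (fun x => (IsEmpty.false x).elim)
    simp at hE
  obtain ⟨x₁⟩ := hX
  -- pointwise relations in the free abelian group on Y
  have hpt : ∀ x : X, ∑ a ∈ s, g a • FreeAbelianGroup.of (a x) = 0 := by
    intro x
    have := congrArg (fun w : FreeAbelianGroup X →+ FreeAbelianGroup Y =>
      w (FreeAbelianGroup.of x)) hrel
    simpa [inducedHom] using this
  -- fiberwise coefficient sums vanish
  have hcoef : ∀ (x : X) (y : Y), ∑ a ∈ s.filter (fun a => a x = y), g a = 0 := by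
    intro x y
    have := congrArg (FreeAbelianGroup.coeff y) (hpt x)
    rw [map_sum, map_zero] at this
    rw [Finset.sum_filter]
    calc (∑ a ∈ s, if a x = y then g a else 0)
        = ∑ a ∈ s, FreeAbelianGroup.coeff y (g a • FreeAbelianGroup.of (a x)) := by
          refine Finset.sum_congr rfl fun a _ => ?_
          rw [map_zsmul]
          simp only [FreeAbelianGroup.coeff, AddMonoidHom.comp_apply,
            FreeAbelianGroup.toFinsupp_of, Finsupp.applyAddHom_apply, Finsupp.single_apply]
          split <;> simp
      _ = 0 := this
  -- total coefficient sum vanishes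
  have htot : ∑ a ∈ s, g a = 0 := by
    have := congrArg (FreeAbelianGroup.lift (fun _ : Y => (1 : ℤ))) (hpt x₁)
    rw [map_sum, map_zero] at this
    simpa [FreeAbelianGroup.lift_apply_of] using this
  -- the covering indexed by boolean relations on s
  let E : (↥s → ↥s → Bool) → Set X :=
    fun R => {x | ∀ a b : ↥s, (a.1 x = b.1 x) ↔ R a b = true}
  have hcover : ∀ x : X, ∃ E' ∈ Finset.univ.image E, x ∈ E' := by
    intro x
    refine ⟨E (fun a b => decide (a.1 x = b.1 x)),
      Finset.mem_image_of_mem _ (Finset.mem_univ _), ?_⟩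
    intro a b
    simp
  obtain ⟨E₀, hE₀S, hrep⟩ := hXY _ hcover
  obtain ⟨R, -, rfl⟩ := Finset.mem_image.mp hE₀S
  rcases (E R).eq_empty_or_nonempty with hemp | ⟨x₀, hx₀⟩
  · -- all maps are homotopic; use the total sum
    rcases s.eq_empty_or_nonempty with rfl | ⟨a₀, ha₀⟩
    · simp
    have hc : ∀ a ∈ s, f a = f a₀ := fun a _ =>
      hf _ _ (hrep _ _ (by rw [hemp]; exact fun x hx => hx.elim))
    calc ∑ a ∈ s, g a • f a = ∑ a ∈ s, g a • f a₀ :=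
          Finset.sum_congr rfl fun a ha => by rw [hc a ha]
      _ = (∑ a ∈ s, g a) • f a₀ := (Finset.sum_smul).symm
      _ = 0 := by rw [htot, zero_smul]
  · -- f is constant on the fibers of evaluation at x₀
    have hconst : ∀ a ∈ s, ∀ b ∈ s, a x₀ = b x₀ → f a = f b := by
      intro a ha b hb hab
      refine hf _ _ (hrep _ _ ?_)
      intro x hx
      exact (hx ⟨a, ha⟩ ⟨b, hb⟩).mpr ((hx₀ ⟨a, ha⟩ ⟨b, hb⟩).mp hab)
    rw [← Finset.sum_fiberwise_of_maps_to
      (fun a ha => Finset.mem_image_of_mem (fun a => a x₀) ha) (fun a => g a • f a)]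
    refine Finset.sum_eq_zero fun y hy => ?_
    obtain ⟨a₀, ha₀, ha₀y⟩ := Finset.mem_image.mp hy
    calc ∑ a ∈ s.filter (fun a => a x₀ = y), g a • f a
        = ∑ a ∈ s.filter (fun a => a x₀ = y), g a • f a₀ := by
          refine Finset.sum_congr rfl fun a ha => ?_
          obtain ⟨has, hay⟩ := Finset.mem_filter.mp ha
          rw [hconst a has a₀ ha₀ (hay.trans ha₀y.symm)]
      _ = (∑ a ∈ s.filter (fun a => a x₀ = y), g a) • f a₀ := (Finset.sum_smul).symm
      _ = 0 := by rw [hcoef x₀ y, zero_smul]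

end Aux

/-- **Lemma 14.1.** If `M` is divisible and `X` is `Y`-unitary, then every homotopy invariant
`f : [X,Y] → M` is straight. -/
theorem invariant_isStraight_of_unitary (X Y M : Type*) [TopologicalSpace X]
    [TopologicalSpace Y] [AddCommGroup M]
    (hdiv : ∀ (m : M) (n : ℤ), n ≠ 0 → ∃ m' : M, n • m' = m)
    (hXY : IsUnitary X Y) (f : C(X, Y) → M) (hf : IsHomotopyInvariant f) :
    IsStraight f := by
  classical
  haveI : DivisibleBy M ℤ :=
    { div := fun m n => if h : n = 0 then 0 else (hdiv m n h).choose
      div_zero := fun a => by simp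
      div_cancel := fun {n} a h => by
        show n • (if hn : n = 0 then 0 else (hdiv a n hn).choose) = a
        rw [dif_neg h]
        exact (hdiv a n h).choose_spec }
  set φ : FreeAbelianGroup C(X, Y) →+ Lgroup X Y :=
    FreeAbelianGroup.lift (fun a : C(X, Y) => inducedL ⇑a) with hφ
  set ψ : FreeAbelianGroup C(X, Y) →+ M := FreeAbelianGroup.lift f with hψ
  -- ψ kills the kernel of φ, by the key relation lemma
  have hker : ∀ z ∈ φ.ker, ψ z = 0 := by
    intro z hz
    rw [AddMonoidHom.mem_ker] at hz
    have h1 : φ z = ∑ a ∈ z.support, FreeAbelianGroup.coeff a z • inducedL ⇑a := by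
      conv_lhs => rw [freeAbelianGroup_eq_sum_support z]
      rw [map_sum]
      exact Finset.sum_congr rfl fun a _ => by
        rw [map_zsmul, hφ, FreeAbelianGroup.lift_apply_of]
    have h2 : ψ z = ∑ a ∈ z.support, FreeAbelianGroup.coeff a z • f a := by
      conv_lhs => rw [freeAbelianGroup_eq_sum_support z]
      rw [map_sum]
      exact Finset.sum_congr rfl fun a _ => by
        rw [map_zsmul, hψ, FreeAbelianGroup.lift_apply_of]
    have h3 : ∑ a ∈ z.support, FreeAbelianGroup.coeff a z • inducedHom ⇑a = 0 := by
      have := congrArg (fun w : Lgroup X Y =>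
        (w : FreeAbelianGroup X →+ FreeAbelianGroup Y)) (h1.symm.trans hz)
      simpa [inducedL] using this
    rw [h2]
    exact key_relation hXY f hf z.support (fun a => FreeAbelianGroup.coeff a z) h3
  -- factor ψ through the range of φ and extend by divisibility
  set F₁ : FreeAbelianGroup C(X, Y) ⧸ φ.ker →+ M := QuotientAddGroup.lift φ.ker ψ
    (fun z hz => (AddMonoidHom.mem_ker).mpr (hker z hz)) with hF₁
  set e : (FreeAbelianGroup C(X, Y) ⧸ φ.ker) ≃+ φ.range :=
    QuotientAddGroup.quotientKerEquivRange φ with he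
  set F₀ : φ.range →+ M := F₁.comp e.symm.toAddMonoidHom with hF₀
  obtain ⟨F, hF⟩ := (Module.Baer.of_divisible M).extension_property_addMonoidHom
    φ.range.subtype (AddSubgroup.subtype_injective φ.range) F₀
  refine ⟨F, fun a => ?_⟩
  have hmem : inducedL ⇑a ∈ φ.range := ⟨FreeAbelianGroup.of a, FreeAbelianGroup.lift_apply_of _ _⟩
  have hemk : e (QuotientAddGroup.mk (FreeAbelianGroup.of a)) = ⟨inducedL ⇑a, hmem⟩ := by
    apply Subtype.ext
    show φ (FreeAbelianGroup.of a) = inducedL ⇑a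
    rw [hφ, FreeAbelianGroup.lift_apply_of]
  have h4 : F (inducedL ⇑a) = F₀ ⟨inducedL ⇑a, hmem⟩ :=
    DFunLike.congr_fun hF ⟨inducedL ⇑a, hmem⟩
  rw [h4, hF₀, AddMonoidHom.comp_apply, AddEquiv.coe_toAddMonoidHom,
    (AddEquiv.symm_apply_eq e).mpr hemk.symm]
  show f a = F₁ (QuotientAddGroup.mk (FreeAbelianGroup.of a))
  rw [hF₁, QuotientAddGroup.lift_mk, hψ, FreeAbelianGroup.lift_apply_of]
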